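/- Let α : ℝ → E³ be a unit-speed curve with Bishop frame {T, M₁, M₂} and Bishop curvatures k₁, k₂. If α is a generalized helix with fixed unit axis X making constant angle θ ≠ π/2 with T (i.e., ⟨T(s), X⟩ = cos θ ≠ 0 for all s), then setting H₁(s) = ⟨M₁(s),X⟩/cos θ and H₂(s) = ⟨M₂(s),X⟩/cos θ, one has H₁′ = −k₁, H₂′ = −k₂, and consequently k₁(s)∫₀ˢk₁ + k₂(s)∫₀ˢk₂ = k₁(s)(H₁(0) − H₁(s)) + k₂(s)(H₂(0) − H₂(s)), and in particular k₁H₁ + k₂H₂ = 0 for all s. -/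

import Mathlib

open RealInnerProductSpace

/-- If α is a generalized helix with unit axis X, ⟨T(s),X⟩ = cos θ ≠ 0, then
H₁ = ⟨M₁,X⟩/cos θ and H₂ = ⟨M₂,X⟩/cos θ satisfy H₁′ = −k₁, H₂′ = −k₂, the integral
identity k₁∫₀ˢk₁ + k₂∫₀ˢk₂ = k₁(H₁(0) − H₁(s)) + k₂(H₂(0) − H₂(s)), and
k₁H₁ + k₂H₂ = 0. -/
theorem stmt5
    (α T M₁ M₂ : ℝ → EuclideanSpace ℝ (Fin 3)) (k₁ k₂ : ℝ → ℝ)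
    (hk₁ : Continuous k₁) (hk₂ : Continuous k₂)
    (hα : Differentiable ℝ α) (hT : ∀ s, deriv α s = T s)
    (hTd : Differentiable ℝ T) (hM₁d : Differentiable ℝ M₁) (hM₂d : Differentiable ℝ M₂)
    (hTT : ∀ s, ⟪T s, T s⟫ = 1) (hM₁M₁ : ∀ s, ⟪M₁ s, M₁ s⟫ = 1)
    (hM₂M₂ : ∀ s, ⟪M₂ s, M₂ s⟫ = 1)
    (hTM₁ : ∀ s, ⟪T s, M₁ s⟫ = 0) (hTM₂ : ∀ s, ⟪T s, M₂ s⟫ = 0)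
    (hM₁M₂ : ∀ s, ⟪M₁ s, M₂ s⟫ = 0)
    (hT' : ∀ s, deriv T s = k₁ s • M₁ s + k₂ s • M₂ s)
    (hM₁' : ∀ s, deriv M₁ s = -(k₁ s) • T s)
    (hM₂' : ∀ s, deriv M₂ s = -(k₂ s) • T s)
    (X : EuclideanSpace ℝ (Fin 3)) (hXunit : ‖X‖ = 1) (θ : ℝ)
    (hθ : Real.cos θ ≠ 0) (hconst : ∀ s, ⟪T s, X⟫ = Real.cos θ)
    (H₁ H₂ : ℝ → ℝ)
    (hH₁def : ∀ s, H₁ s = ⟪M₁ s, X⟫ / Real.cos θ)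
    (hH₂def : ∀ s, H₂ s = ⟪M₂ s, X⟫ / Real.cos θ) :
    (∀ s, deriv H₁ s = -(k₁ s)) ∧ (∀ s, deriv H₂ s = -(k₂ s)) ∧
    (∀ s, k₁ s * (∫ t in (0:ℝ)..s, k₁ t) + k₂ s * (∫ t in (0:ℝ)..s, k₂ t)
        = k₁ s * (H₁ 0 - H₁ s) + k₂ s * (H₂ 0 - H₂ s)) ∧
    (∀ s, k₁ s * H₁ s + k₂ s * H₂ s = 0) := by

  -- derivative of H₁ and H₂
  have hd₁ : ∀ s, HasDerivAt H₁ (-(k₁ s)) s := by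
    intro s
    have h1 : HasDerivAt (fun t => (⟪M₁ t, X⟫ : ℝ)) (⟪M₁ s, (0 : EuclideanSpace ℝ (Fin 3))⟫ + ⟪deriv M₁ s, X⟫) s :=
      ((hM₁d s).hasDerivAt).inner ℝ (hasDerivAt_const s X)
    have h2 : (⟪M₁ s, (0 : EuclideanSpace ℝ (Fin 3))⟫ + ⟪deriv M₁ s, X⟫ : ℝ) = -(k₁ s) * Real.cos θ := by
      rw [hM₁' s, inner_zero_right, inner_smul_left]
      simp [hconst s]
    rw [h2] at h1
    have h3 : HasDerivAt (fun t => (⟪M₁ t, X⟫ : ℝ) / Real.cos θ) (-(k₁ s) * Real.cos θ / Real.cos θ) s := h1.div_const _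
    have h4 : H₁ = fun t => (⟪M₁ t, X⟫ : ℝ) / Real.cos θ := funext hH₁def
    rw [h4]
    convert h3 using 1
    field_simp
  have hd₂ : ∀ s, HasDerivAt H₂ (-(k₂ s)) s := by
    intro s
    have h1 : HasDerivAt (fun t => (⟪M₂ t, X⟫ : ℝ)) (⟪M₂ s, (0 : EuclideanSpace ℝ (Fin 3))⟫ + ⟪deriv M₂ s, X⟫) s :=
      ((hM₂d s).hasDerivAt).inner ℝ (hasDerivAt_const s X)
    have h2 : (⟪M₂ s, (0 : EuclideanSpace ℝ (Fin 3))⟫ + ⟪deriv M₂ s, X⟫ : ℝ) = -(k₂ s) * Real.cos θ := by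
      rw [hM₂' s, inner_zero_right, inner_smul_left]
      simp [hconst s]
    rw [h2] at h1
    have h3 : HasDerivAt (fun t => (⟪M₂ t, X⟫ : ℝ) / Real.cos θ) (-(k₂ s) * Real.cos θ / Real.cos θ) s := h1.div_const _
    have h4 : H₂ = fun t => (⟪M₂ t, X⟫ : ℝ) / Real.cos θ := funext hH₂def
    rw [h4]
    convert h3 using 1
    field_simp
  have hint₁ : ∀ s : ℝ, (∫ t in (0:ℝ)..s, k₁ t) = H₁ 0 - H₁ s := by
    intro s
    have := intervalIntegral.integral_eq_sub_of_hasDerivAt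
      (f := H₁) (f' := fun t => -(k₁ t)) (a := 0) (b := s)
      (fun t _ => hd₁ t) ((hk₁.neg).intervalIntegrable 0 s)
    have h : (∫ t in (0:ℝ)..s, -(k₁ t)) = -(∫ t in (0:ℝ)..s, k₁ t) := by
      simp [intervalIntegral.integral_neg]
    rw [h] at this
    linarith
  have hint₂ : ∀ s : ℝ, (∫ t in (0:ℝ)..s, k₂ t) = H₂ 0 - H₂ s := by
    intro s
    have := intervalIntegral.integral_eq_sub_of_hasDerivAt
      (f := H₂) (f' := fun t => -(k₂ t)) (a := 0) (b := s)
      (fun t _ => hd₂ t) ((hk₂.neg).intervalIntegrable 0 s)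
    have h : (∫ t in (0:ℝ)..s, -(k₂ t)) = -(∫ t in (0:ℝ)..s, k₂ t) := by
      simp [intervalIntegral.integral_neg]
    rw [h] at this
    linarith
  refine ⟨fun s => (hd₁ s).deriv, fun s => (hd₂ s).deriv, fun s => by rw [hint₁ s, hint₂ s], ?_⟩
  intro s
  -- ⟪T s, X⟫ constant, so derivative is 0
  have hc : HasDerivAt (fun t => (⟪T t, X⟫ : ℝ)) 0 s := by
    have : (fun t => (⟪T t, X⟫ : ℝ)) = fun _ => Real.cos θ := funext hconst
    rw [this]; exact hasDerivAt_const s _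
  have hc' : HasDerivAt (fun t => (⟪T t, X⟫ : ℝ)) (⟪T s, (0 : EuclideanSpace ℝ (Fin 3))⟫ + ⟪deriv T s, X⟫) s :=
    ((hTd s).hasDerivAt).inner ℝ (hasDerivAt_const s X)
  have hz : (⟪T s, (0 : EuclideanSpace ℝ (Fin 3))⟫ + ⟪deriv T s, X⟫ : ℝ) = 0 :=
    hc'.unique hc
  rw [hT' s, inner_zero_right, zero_add, inner_add_left, inner_smul_left, inner_smul_left] at hz
  simp only [starRingEnd_apply, star_trivial] at hz
  rw [hH₁def s, hH₂def s, ← mul_div_assoc, ← mul_div_assoc, ← add_div, hz, zero_div]
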